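/- Let (A, M, α) be a pre-log ring with logification (A, Mᵃ, αᵃ). The natural map of log differential modules Ω¹_{(A,M)} → Ω¹_{(A,Mᵃ)} induced by M → Mᵃ is an isomorphism of A-modules. -/

import Mathlib

open scoped TensorProduct

/-- The submodule of relations `dα(m) ∼ α(m) ⊗ [m]` defining the log Kähler differentials of
a pre-log ring `(A, M, α)` relative to a group completion `ι : M → G` of `M`. -/
noncomputable def logRel (A : Type) [CommRing A] {M : Type} [CommMonoid M] (α : M →* A)
    {G : Type} [CommGroup G] (ι : M →* G) :
    Submodule A (KaehlerDifferential ℤ A × (A ⊗[ℤ] Additive G)) :=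
  Submodule.span A
    {x | ∃ m : M,
      x = ((KaehlerDifferential.D ℤ A) (α m), 0) -
        (0, α m • ((1 : A) ⊗ₜ[ℤ] Additive.ofMul (ι m)))}

/-- The module of log Kähler differentials
`Ω¹_{(A,M)} = (Ω¹_A ⊕ (A ⊗_ℤ M^gp)) / ⟨dα(m) − α(m) ⊗ [m]⟩`. -/
noncomputable abbrev LogDiff (A : Type) [CommRing A] {M : Type} [CommMonoid M] (α : M →* A)
    {G : Type} [CommGroup G] (ι : M →* G) : Type :=
  (KaehlerDifferential ℤ A × (A ⊗[ℤ] Additive G)) ⧸ logRel A α ι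

section Helpers

variable (A : Type) [CommRing A] {M : Type} [CommMonoid M] {G : Type} [CommGroup G]

/-- The defining relation of `logRel`, as an equality in the quotient. -/
theorem logRel_mk_rel (α : M →* A) (ι : M →* G) (m : M) :
    (Submodule.Quotient.mk (p := logRel A α ι) ((KaehlerDifferential.D ℤ A) (α m), 0)) =
    Submodule.Quotient.mk (p := logRel A α ι)
      (0, α m • ((1 : A) ⊗ₜ[ℤ] Additive.ofMul (ι m))) := by
  rw [Submodule.Quotient.eq]
  exact Submodule.subset_span ⟨m, rfl⟩

/-- The forward map on presentations, `(ω, a ⊗ [x]) ↦ (ω, a ⊗ [jgp x])`. -/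
noncomputable def fwdMap {Ga : Type} [CommGroup Ga] (jgp : G →* Ga) :
    (KaehlerDifferential ℤ A × (A ⊗[ℤ] Additive G)) →ₗ[A]
      (KaehlerDifferential ℤ A × (A ⊗[ℤ] Additive Ga)) :=
  LinearMap.prodMap LinearMap.id
    (LinearMap.baseChange A (MonoidHom.toAdditive jgp).toIntLinearMap)

@[simp] theorem fwdMap_apply_tmul {Ga : Type} [CommGroup Ga] (jgp : G →* Ga)
    (ω : KaehlerDifferential ℤ A) (a : A) (x : G) :
    fwdMap A jgp (ω, a ⊗ₜ[ℤ] Additive.ofMul x) = (ω, a ⊗ₜ[ℤ] Additive.ofMul (jgp x)) := rfl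

@[simp] theorem fwdMap_apply_zero {Ga : Type} [CommGroup Ga] (jgp : G →* Ga)
    (ω : KaehlerDifferential ℤ A) :
    fwdMap A jgp (ω, 0) = (ω, 0) := by
  simp [fwdMap]

/-- `x ↦ [mk (0, 1 ⊗ [x])]` as a monoid hom into the multiplicative log differentials. -/
noncomputable def tmulMk (α : M →* A) (ι : M →* G) :
    G →* Multiplicative (LogDiff A α ι) where
  toFun x := Multiplicative.ofAdd
    (Submodule.Quotient.mk (0, (1 : A) ⊗ₜ[ℤ] Additive.ofMul x))
  map_one' := by
    simp only [ofMul_one, TensorProduct.tmul_zero]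
    rw [show ((0, (0 : A ⊗[ℤ] Additive G)) :
        KaehlerDifferential ℤ A × (A ⊗[ℤ] Additive G)) = 0 from rfl,
      Submodule.Quotient.mk_zero]
    rfl
  map_mul' x y := by
    have h : ((0 : KaehlerDifferential ℤ A),
          ((1 : A) ⊗ₜ[ℤ] Additive.ofMul (x * y) : A ⊗[ℤ] Additive G))
        = (0, (1 : A) ⊗ₜ[ℤ] Additive.ofMul x) + (0, (1 : A) ⊗ₜ[ℤ] Additive.ofMul y) := by
      rw [Prod.mk_add_mk, add_zero]
      congr 1
      rw [ofMul_mul, TensorProduct.tmul_add]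
    rw [h, Submodule.Quotient.mk_add]
    rfl

/-- `v ↦ [mk (v⁻¹ • d v, 0)]` (the logarithmic derivative of a unit) as a monoid hom
into the multiplicative log differentials. -/
noncomputable def dlogMk (α : M →* A) (ι : M →* G) :
    Aˣ →* Multiplicative (LogDiff A α ι) where
  toFun v := Multiplicative.ofAdd
    (Submodule.Quotient.mk ((((v⁻¹ : Aˣ) : A) • (KaehlerDifferential.D ℤ A (v : A))), 0))
  map_one' := by
    simp only [inv_one, Units.val_one, one_smul, Derivation.map_one_eq_zero]
    rw [show (((0 : KaehlerDifferential ℤ A), (0 : A ⊗[ℤ] Additive G)) :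
        KaehlerDifferential ℤ A × (A ⊗[ℤ] Additive G)) = 0 from rfl,
      Submodule.Quotient.mk_zero]
    rfl
  map_mul' v w := by
    simp only [← ofAdd_add]
    congr 1
    rw [← Submodule.Quotient.mk_add]
    congr 1
    rw [Prod.ext_iff]
    constructor
    · show (((v * w)⁻¹ : Aˣ) : A) • (KaehlerDifferential.D ℤ A ((v : A) * (w : A))) =
        ((v⁻¹ : Aˣ) : A) • _ + ((w⁻¹ : Aˣ) : A) • _
      rw [Derivation.leibniz, mul_inv, Units.val_mul, smul_add, smul_smul, smul_smul]
      rw [show ((v⁻¹ : Aˣ) : A) * ((w⁻¹ : Aˣ) : A) * (v : A)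
          = ((w⁻¹ : Aˣ) : A) * (((v⁻¹ : Aˣ) : A) * (v : A)) by ring,
        show ((v⁻¹ : Aˣ) : A) * ((w⁻¹ : Aˣ) : A) * (w : A)
          = ((v⁻¹ : Aˣ) : A) * (((w⁻¹ : Aˣ) : A) * (w : A)) by ring,
        Units.inv_mul, Units.inv_mul, mul_one, mul_one, add_comm]
    · show (0 : A ⊗[ℤ] Additive G) = 0 + 0
      simp

@[simp] theorem tmulMk_apply (α : M →* A) (ι : M →* G) (x : G) :
    tmulMk A α ι x = Multiplicative.ofAdd
      (Submodule.Quotient.mk (0, (1 : A) ⊗ₜ[ℤ] Additive.ofMul x)) := rfl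

@[simp] theorem dlogMk_apply (α : M →* A) (ι : M →* G) (v : Aˣ) :
    dlogMk A α ι v = Multiplicative.ofAdd
      (Submodule.Quotient.mk ((((v⁻¹ : Aˣ) : A) •
        (KaehlerDifferential.D ℤ A (v : A))), 0)) := rfl

/-- Splitting a class in the log differentials into its two components. -/
theorem logDiff_mk_split (α : M →* A) (ι : M →* G) (ω : KaehlerDifferential ℤ A)
    (t : A ⊗[ℤ] Additive G) :
    (Submodule.Quotient.mk (p := logRel A α ι) (ω, t)) =
      Submodule.Quotient.mk (p := logRel A α ι) (ω, 0) +
      Submodule.Quotient.mk (p := logRel A α ι) (0, t) := by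
  rw [← Submodule.Quotient.mk_add, Prod.mk_add_mk, add_zero, zero_add]

theorem logDiff_mk_split' (α : M →* A) (ι : M →* G)
    (t₁ t₂ : A ⊗[ℤ] Additive G) :
    (Submodule.Quotient.mk (p := logRel A α ι) ((0 : KaehlerDifferential ℤ A), t₁ + t₂)) =
      Submodule.Quotient.mk (p := logRel A α ι) (0, t₁) +
      Submodule.Quotient.mk (p := logRel A α ι) (0, t₂) := by
  rw [← Submodule.Quotient.mk_add, Prod.mk_add_mk, add_zero]

end Helpers

set_option maxHeartbeats 2000000 in
/-- Let `(A, M, α)` be a pre-log ring with logification `(A, Mᵃ, αᵃ)`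
(`Mᵃ` the pushout of `M ← α⁻¹(Aˣ) → Aˣ`, presented by its universal property).  The natural
map `Ω¹_{(A,M)} → Ω¹_{(A,Mᵃ)}` — given by the identity on `Ω¹_A` and the induced map
`M^gp → (Mᵃ)^gp` — exists and is an isomorphism of `A`-modules. -/
theorem logDiff_logification_invariance
    {A M G Ma Ga : Type} [CommRing A] [CommMonoid M] [CommGroup G]
    [CommMonoid Ma] [CommGroup Ga]
    (α : M →* A) (ι : M →* G)
    (hG : ∀ (H : Type) [CommGroup H] (g : M →* H), ∃! h : G →* H, ∀ m, h (ι m) = g m)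
    -- logification data: the restriction of `α` to `α⁻¹(Aˣ)`
    (r : (Submonoid.comap α (IsUnit.submonoid A)) →* Aˣ)
    (hr : ∀ x : Submonoid.comap α (IsUnit.submonoid A), ((r x : Aˣ) : A) = α x)
    (j : M →* Ma) (u : Aˣ →* Ma)
    (hcomm : ∀ x : Submonoid.comap α (IsUnit.submonoid A), j (x : M) = u (r x))
    (hpush : ∀ (T : Type) [CommMonoid T] (g : M →* T) (h : Aˣ →* T),
      (∀ x : Submonoid.comap α (IsUnit.submonoid A), g (x : M) = h (r x)) →
      ∃! k : Ma →* T, (∀ m, k (j m) = g m) ∧ (∀ v, k (u v) = h v))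
    (αa : Ma →* A) (hαaj : ∀ m, αa (j m) = α m) (hαau : ∀ v : Aˣ, αa (u v) = (v : A))
    -- group completion of `Mᵃ` and the induced map `M^gp → (Mᵃ)^gp`
    (ιa : Ma →* Ga)
    (hGa : ∀ (H : Type) [CommGroup H] (g : Ma →* H), ∃! h : Ga →* H, ∀ x, h (ιa x) = g x)
    (jgp : G →* Ga) (hjgp : ∀ m, jgp (ι m) = ιa (j m)) :
    (∃ φ : LogDiff A α ι →ₗ[A] LogDiff A αa ιa,
      (∀ ω : KaehlerDifferential ℤ A,
        φ (Submodule.Quotient.mk (p := logRel A α ι) (ω, 0)) =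
          Submodule.Quotient.mk (p := logRel A αa ιa) (ω, 0)) ∧
      (∀ (a : A) (x : G),
        φ (Submodule.Quotient.mk (p := logRel A α ι) (0, a ⊗ₜ[ℤ] Additive.ofMul x)) =
          Submodule.Quotient.mk (p := logRel A αa ιa) (0, a ⊗ₜ[ℤ] Additive.ofMul (jgp x)))) ∧
    (∀ φ : LogDiff A α ι →ₗ[A] LogDiff A αa ιa,
      ((∀ ω : KaehlerDifferential ℤ A,
        φ (Submodule.Quotient.mk (p := logRel A α ι) (ω, 0)) =
          Submodule.Quotient.mk (p := logRel A αa ιa) (ω, 0)) ∧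
      (∀ (a : A) (x : G),
        φ (Submodule.Quotient.mk (p := logRel A α ι) (0, a ⊗ₜ[ℤ] Additive.ofMul x)) =
          Submodule.Quotient.mk (p := logRel A αa ιa) (0, a ⊗ₜ[ℤ] Additive.ofMul (jgp x)))) →
      Function.Bijective φ) := by
  classical
  -- the forward map
  have hF : logRel A α ι ≤ (logRel A αa ιa).comap (fwdMap A jgp) := by
    rw [logRel, Submodule.span_le]
    rintro _ ⟨m, rfl⟩
    refine Submodule.mem_comap.2 ?_
    have h1 : fwdMap A jgp (((KaehlerDifferential.D ℤ A) (α m), 0) -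
        (0, α m • ((1 : A) ⊗ₜ[ℤ] Additive.ofMul (ι m)))) =
        ((KaehlerDifferential.D ℤ A) (αa (j m)), 0) -
        (0, αa (j m) • ((1 : A) ⊗ₜ[ℤ] Additive.ofMul (ιa (j m)))) := by
      rw [map_sub]
      congr 1
      · rw [fwdMap_apply_zero, hαaj]
      · have h2 : ((0 : KaehlerDifferential ℤ A), α m • ((1 : A) ⊗ₜ[ℤ] Additive.ofMul (ι m)))
            = α m • ((0 : KaehlerDifferential ℤ A), (1 : A) ⊗ₜ[ℤ] Additive.ofMul (ι m)) := by
          rw [Prod.smul_mk, smul_zero]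
        rw [h2, map_smul, fwdMap_apply_tmul, hjgp, hαaj, Prod.smul_mk, smul_zero]
    rw [h1]
    exact Submodule.subset_span ⟨j m, rfl⟩
  set φ0 : LogDiff A α ι →ₗ[A] LogDiff A αa ιa :=
    Submodule.mapQ (logRel A α ι) (logRel A αa ιa) (fwdMap A jgp) hF with hφ0def
  have hφ0mk : ∀ p, φ0 (Submodule.Quotient.mk p) =
      Submodule.Quotient.mk (fwdMap A jgp p) := fun p => Submodule.mapQ_apply _ _ _ _
  have hφ0a : ∀ ω : KaehlerDifferential ℤ A,
      φ0 (Submodule.Quotient.mk (p := logRel A α ι) (ω, 0)) =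
        Submodule.Quotient.mk (p := logRel A αa ιa) (ω, 0) := fun ω => by
    rw [hφ0mk, fwdMap_apply_zero]
  have hφ0b : ∀ (a : A) (x : G),
      φ0 (Submodule.Quotient.mk (p := logRel A α ι) (0, a ⊗ₜ[ℤ] Additive.ofMul x)) =
        Submodule.Quotient.mk (p := logRel A αa ιa) (0, a ⊗ₜ[ℤ] Additive.ofMul (jgp x)) :=
    fun a x => by rw [hφ0mk, fwdMap_apply_tmul]
  -- compatibility of `tmulMk` and `dlogMk` on the pushout corner
  have hcompat : ∀ x : Submonoid.comap α (IsUnit.submonoid A),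
      ((tmulMk A α ι).comp ι) (x : M) = (dlogMk A α ι) (r x) := by
    intro x
    simp only [MonoidHom.comp_apply, tmulMk_apply, dlogMk_apply]
    congr 1
    have hone : ((((r x)⁻¹ : Aˣ) : A)) * α (x : M) = 1 := by
      rw [← hr x]; exact Units.inv_mul _
    have hrel := logRel_mk_rel A α ι (x : M)
    have hv := congrArg (fun q => (((((r x)⁻¹ : Aˣ) : A))) • q) hrel
    simp only [← Submodule.Quotient.mk_smul, Prod.smul_mk, smul_zero, smul_smul,
      hone, one_smul] at hv
    rw [hr x]
    exact hv.symm
  obtain ⟨k, ⟨hkj, hku⟩, hkuniq⟩ :=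
    hpush (Multiplicative (LogDiff A α ι)) ((tmulMk A α ι).comp ι) (dlogMk A α ι) hcompat
  obtain ⟨ψ, hψ, hψuniq⟩ := hGa (Multiplicative (LogDiff A α ι)) k
  -- the backward map on the presentation
  set L : Additive Ga →ₗ[ℤ] LogDiff A α ι := (MonoidHom.toAdditiveLeft ψ).toIntLinearMap with hLdef
  set B2 : (A ⊗[ℤ] Additive Ga) →ₗ[A] LogDiff A α ι :=
    TensorProduct.AlgebraTensorModule.lift
      (LinearMap.toSpanSingleton A (Additive Ga →ₗ[ℤ] LogDiff A α ι) L) with hB2def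
  have hB2t : ∀ (a : A) (y : Ga), B2 (a ⊗ₜ[ℤ] Additive.ofMul y) = a • (ψ y).toAdd := by
    intro a y
    rw [hB2def, TensorProduct.AlgebraTensorModule.lift_tmul]
    rfl
  set B0 : (KaehlerDifferential ℤ A × (A ⊗[ℤ] Additive Ga)) →ₗ[A] LogDiff A α ι :=
    LinearMap.coprod ((logRel A α ι).mkQ.comp
      (LinearMap.inl A (KaehlerDifferential ℤ A) (A ⊗[ℤ] Additive G))) B2 with hB0def
  have hB0a : ∀ ω : KaehlerDifferential ℤ A, B0 (ω, 0) =
      Submodule.Quotient.mk (p := logRel A α ι) (ω, 0) := by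
    intro ω
    rw [hB0def]
    simp [LinearMap.coprod_apply]
  have hB0b : ∀ t : A ⊗[ℤ] Additive Ga, B0 (0, t) = B2 t := by
    intro t
    rw [hB0def]
    simp [LinearMap.coprod_apply]
    exact Submodule.zero_mem _
  -- `Ma` is generated by the images of `j` and `u`
  have hgen : ∀ x : Ma, x ∈ Submonoid.closure (Set.range j ∪ Set.range u) := by
    intro x
    set S := Submonoid.closure (Set.range j ∪ Set.range u) with hS
    have hjS : ∀ m, j m ∈ S := fun m => Submonoid.subset_closure (Or.inl ⟨m, rfl⟩)
    have huS : ∀ v, u v ∈ S := fun v => Submonoid.subset_closure (Or.inr ⟨v, rfl⟩)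
    obtain ⟨k₀, ⟨hk₀j, hk₀u⟩, -⟩ := hpush S (j.codRestrict S hjS) (u.codRestrict S huS)
      (fun x => Subtype.ext (by simpa using hcomm x))
    obtain ⟨k₁, -, hk₁uniq⟩ := hpush Ma j u hcomm
    have h1 : S.subtype.comp k₀ = MonoidHom.id Ma := by
      rw [hk₁uniq (S.subtype.comp k₀)
        ⟨fun m => by simp [hk₀j m], fun v => by simp [hk₀u v]⟩,
        hk₁uniq (MonoidHom.id Ma) ⟨fun m => rfl, fun v => rfl⟩]
    have h2 : S.subtype (k₀ x) = x := DFunLike.congr_fun h1 x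
    rw [← h2]
    exact (k₀ x).2
  -- the key relation: `d(αᵃ x) = αᵃ(x) • k x` in the log differentials of `(A, M)`
  have hkey : ∀ x : Ma,
      (Submodule.Quotient.mk (p := logRel A α ι) ((KaehlerDifferential.D ℤ A) (αa x), 0)) =
        αa x • (k x).toAdd := by
    intro x
    induction hgen x using Submonoid.closure_induction with
    | mem y hy =>
      rcases hy with ⟨m, rfl⟩ | ⟨v, rfl⟩
      · rw [hαaj, hkj, MonoidHom.comp_apply, tmulMk_apply, toAdd_ofAdd,
          logRel_mk_rel A α ι m]
        simp only [← Submodule.Quotient.mk_smul, Prod.smul_mk, smul_zero]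
      · rw [hαau, hku, dlogMk_apply, toAdd_ofAdd]
        simp only [← Submodule.Quotient.mk_smul, Prod.smul_mk, smul_zero, smul_smul,
          Units.mul_inv, one_smul]
    | one =>
      rw [map_one αa, map_one k, Derivation.map_one_eq_zero]
      rw [show (((0 : KaehlerDifferential ℤ A), (0 : A ⊗[ℤ] Additive G)) :
          KaehlerDifferential ℤ A × (A ⊗[ℤ] Additive G)) = 0 from rfl,
        Submodule.Quotient.mk_zero]
      rw [show ((1 : Multiplicative (LogDiff A α ι)).toAdd) = 0 from rfl, smul_zero]
    | mul y z hy hz ihy ihz =>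
      rw [map_mul αa, map_mul k, Derivation.leibniz, toAdd_mul]
      have hsum : ((αa y • (KaehlerDifferential.D ℤ A) (αa z) +
            αa z • (KaehlerDifferential.D ℤ A) (αa y), (0 : A ⊗[ℤ] Additive G)) :
            KaehlerDifferential ℤ A × (A ⊗[ℤ] Additive G)) =
          αa y • ((KaehlerDifferential.D ℤ A) (αa z), 0) +
          αa z • ((KaehlerDifferential.D ℤ A) (αa y), 0) := by
        rw [Prod.smul_mk, Prod.smul_mk, Prod.mk_add_mk, smul_zero, smul_zero, add_zero]
      rw [hsum, Submodule.Quotient.mk_add, Submodule.Quotient.mk_smul,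
        Submodule.Quotient.mk_smul, ihy, ihz, smul_add, smul_smul, smul_smul,
        mul_comm (αa z) (αa y), add_comm]
  -- the relations die in the quotient, so `B0` descends
  have hBrel : logRel A αa ιa ≤ LinearMap.ker B0 := by
    rw [logRel, Submodule.span_le]
    rintro _ ⟨x, rfl⟩
    simp only [SetLike.mem_coe, LinearMap.mem_ker, map_sub]
    have h2 : B0 (0, αa x • ((1 : A) ⊗ₜ[ℤ] Additive.ofMul (ιa x))) = αa x • (k x).toAdd := by
      have ht : ((0 : KaehlerDifferential ℤ A), αa x • ((1 : A) ⊗ₜ[ℤ] Additive.ofMul (ιa x)))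
          = αa x • ((0 : KaehlerDifferential ℤ A), (1 : A) ⊗ₜ[ℤ] Additive.ofMul (ιa x)) := by
        rw [Prod.smul_mk, smul_zero]
      rw [ht, map_smul, hB0b, hB2t, hψ x, one_smul]
    rw [hB0a, h2, hkey x, sub_self]
  set B : LogDiff A αa ιa →ₗ[A] LogDiff A α ι :=
    Submodule.liftQ (logRel A αa ιa) B0 hBrel with hBdef
  have hBmk : ∀ p, B (Submodule.Quotient.mk p) = B0 p := fun p => Submodule.liftQ_apply _ _ _
  -- `ψ ∘ jgp` is `tmulMk`
  have hψjgp : ∀ x : G, ψ (jgp x) = tmulMk A α ι x := by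
    obtain ⟨h, -, hhuniq⟩ := hG (Multiplicative (LogDiff A α ι)) ((tmulMk A α ι).comp ι)
    have e1 := hhuniq (ψ.comp jgp) (fun m => by
      rw [MonoidHom.comp_apply, hjgp m, hψ (j m), hkj m])
    have e2 := hhuniq (tmulMk A α ι) (fun m => rfl)
    intro x
    rw [show ψ (jgp x) = (ψ.comp jgp) x from rfl, e1, e2]
  -- B ∘ φ0 = id
  have hBφ : ∀ z : LogDiff A α ι, B (φ0 z) = z := by
    have htens : ∀ t : A ⊗[ℤ] Additive G,
        B (φ0 (Submodule.Quotient.mk (p := logRel A α ι) (0, t))) =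
          Submodule.Quotient.mk (p := logRel A α ι) (0, t) := by
      intro t
      induction t using TensorProduct.induction_on with
      | zero =>
        rw [show (((0 : KaehlerDifferential ℤ A), (0 : A ⊗[ℤ] Additive G)) :
            KaehlerDifferential ℤ A × (A ⊗[ℤ] Additive G)) = 0 from rfl,
          Submodule.Quotient.mk_zero, map_zero, map_zero]
      | tmul a g =>
        rw [show g = Additive.ofMul g.toMul from rfl, hφ0b a g.toMul, hBmk, hB0b, hB2t,
          hψjgp, tmulMk_apply, toAdd_ofAdd, ← Submodule.Quotient.mk_smul]
        congr 1
        rw [Prod.smul_mk, smul_zero, TensorProduct.smul_tmul', smul_eq_mul, mul_one]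
      | add t₁ t₂ ih₁ ih₂ =>
        rw [logDiff_mk_split', map_add, map_add, ih₁, ih₂]
    intro z
    obtain ⟨⟨ω, t⟩, rfl⟩ := Submodule.Quotient.mk_surjective _ z
    rw [logDiff_mk_split, map_add, map_add, hφ0a, hBmk, hB0a, htens]
  -- `φ0 ∘ k = tmulMk ∘ ιa` via the pushout's uniqueness
  set Φ : Multiplicative (LogDiff A α ι) →* Multiplicative (LogDiff A αa ιa) :=
    AddMonoidHom.toMultiplicative φ0.toAddMonoidHom with hΦdef
  have hΦapp : ∀ q : Multiplicative (LogDiff A α ι),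
      Φ q = Multiplicative.ofAdd (φ0 q.toAdd) := fun q => rfl
  have hK12 : Φ.comp k = (tmulMk A αa ιa).comp ιa := by
    obtain ⟨K, -, hKuniq⟩ := hpush (Multiplicative (LogDiff A αa ιa))
      (((tmulMk A αa ιa).comp ιa).comp j) (((tmulMk A αa ιa).comp ιa).comp u)
      (fun x => by
        simp only [MonoidHom.comp_apply]
        rw [hcomm x])
    have c1 : ∀ m, (Φ.comp k) (j m) = (((tmulMk A αa ιa).comp ιa).comp j) m := by
      intro m
      simp only [MonoidHom.comp_apply]
      rw [hkj m, MonoidHom.comp_apply, tmulMk_apply, hΦapp, toAdd_ofAdd, hφ0b, hjgp,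
        tmulMk_apply]
    have c2 : ∀ v, (Φ.comp k) (u v) = (((tmulMk A αa ιa).comp ιa).comp u) v := by
      intro v
      simp only [MonoidHom.comp_apply]
      have hrel := logRel_mk_rel A αa ιa (u v)
      rw [hαau v] at hrel
      have hv := congrArg (fun q => ((((v⁻¹ : Aˣ) : A)) • q)) hrel
      simp only [← Submodule.Quotient.mk_smul, Prod.smul_mk, smul_zero, smul_smul,
        Units.inv_mul, one_smul] at hv
      rw [hku v, dlogMk_apply, hΦapp, toAdd_ofAdd, hφ0a, hv, tmulMk_apply]
    rw [hKuniq (Φ.comp k) ⟨c1, c2⟩,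
      hKuniq ((tmulMk A αa ιa).comp ιa) ⟨fun m => rfl, fun v => rfl⟩]
  have hψφ : ∀ y : Ga, φ0 ((ψ y).toAdd) =
      Submodule.Quotient.mk (p := logRel A αa ιa) (0, (1 : A) ⊗ₜ[ℤ] Additive.ofMul y) := by
    obtain ⟨h, -, hhuniq⟩ := hGa (Multiplicative (LogDiff A αa ιa)) ((tmulMk A αa ιa).comp ιa)
    have e1 := hhuniq (Φ.comp ψ) (fun x => by
      rw [MonoidHom.comp_apply, hψ x, ← MonoidHom.comp_apply Φ k, hK12])
    have e2 := hhuniq (tmulMk A αa ιa) (fun x => rfl)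
    intro y
    have := DFunLike.congr_fun (e1.trans e2.symm) y
    rw [MonoidHom.comp_apply, hΦapp, tmulMk_apply] at this
    exact Multiplicative.ofAdd.injective this
  -- φ0 ∘ B = id
  have hφB : ∀ z : LogDiff A αa ιa, φ0 (B z) = z := by
    have htens : ∀ t : A ⊗[ℤ] Additive Ga,
        φ0 (B (Submodule.Quotient.mk (p := logRel A αa ιa) (0, t))) =
          Submodule.Quotient.mk (p := logRel A αa ιa) (0, t) := by
      intro t
      induction t using TensorProduct.induction_on with
      | zero =>
        rw [show (((0 : KaehlerDifferential ℤ A), (0 : A ⊗[ℤ] Additive Ga)) :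
            KaehlerDifferential ℤ A × (A ⊗[ℤ] Additive Ga)) = 0 from rfl,
          Submodule.Quotient.mk_zero, map_zero, map_zero]
      | tmul a g =>
        rw [show g = Additive.ofMul g.toMul from rfl, hBmk, hB0b, hB2t, map_smul,
          hψφ g.toMul, ← Submodule.Quotient.mk_smul]
        congr 1
        rw [Prod.smul_mk, smul_zero, TensorProduct.smul_tmul', smul_eq_mul, mul_one]
      | add t₁ t₂ ih₁ ih₂ =>
        rw [logDiff_mk_split', map_add, map_add, ih₁, ih₂]
    intro z
    obtain ⟨⟨ω, t⟩, rfl⟩ := Submodule.Quotient.mk_surjective _ z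
    rw [logDiff_mk_split, map_add B, map_add φ0, htens]
    congr 1
    rw [hBmk, hB0a, hφ0a]
  refine ⟨⟨φ0, hφ0a, hφ0b⟩, ?_⟩
  rintro φ ⟨hφa, hφb⟩
  have hφeq : φ = φ0 := by
    apply Submodule.linearMap_qext
    apply LinearMap.ext
    rintro ⟨ω, t⟩
    simp only [LinearMap.comp_apply, Submodule.mkQ_apply]
    induction t using TensorProduct.induction_on with
    | zero =>
      rw [hφa ω, hφ0a ω]
    | tmul a g =>
      rw [logDiff_mk_split, map_add, map_add, hφa, hφ0a,
        show g = Additive.ofMul g.toMul from rfl, hφb a g.toMul, hφ0b a g.toMul]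
    | add t₁ t₂ ih₁ ih₂ =>
      rw [logDiff_mk_split, map_add, map_add, hφa, hφ0a] at ih₁ ih₂ ⊢
      have h₁ := add_left_cancel ih₁
      have h₂ := add_left_cancel ih₂
      congr 1
      rw [logDiff_mk_split', map_add, map_add, h₁, h₂]
  rw [hφeq]
  exact ⟨fun z₁ z₂ h => by rw [← hBφ z₁, ← hBφ z₂, h],
    fun z => ⟨B z, hφB z⟩⟩
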